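/- For every k ∈ X with ‖k‖ ≤ 1 and every z ∈ X with ‖z‖ ≤ 1 and e*(z) ≤ 1 − ρ, it holds that φ⁺(x⁺_α + k − z) ≥ ρ/8 − |e*(k)|. -/
import Mathlib


open Filter Topology Set

set_option maxHeartbeats 1000000

theorem statement6 {X : Type*} [NormedAddCommGroup X] [NormedSpace ℝ X] [CompleteSpace X]
    (ρ t : ℝ) (hρ0 : 0 < ρ) (hρ1 : ρ < 1 / 4) (ht0 : 0 < t) (ht1 : t < ρ / 16)
    (v e h : X) (hv : ‖v‖ = 1) (he : ‖e‖ = 1) (hh : ‖h‖ = 1)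
    (vs es hs : X →L[ℝ] ℝ) (hvs : ‖vs‖ = 1) (hes : ‖es‖ = 1) (hhs : ‖hs‖ = 1)
    (hvv : vs v = 1) (hee : es e = 1) (hhh : hs h = 1) (heh : |es h| < ρ / 800)
    (xp xm yp ym : X)
    (hxp : xp = (1 - ρ / 2) • e + t • h) (hxm : xm = (1 - ρ / 2) • e - t • h)
    (hyp : yp = xp + (ρ / 4) • v) (hym : ym = xm - (ρ / 4) • v)
    (lam : ℝ) (hlam : lam = 1 - ρ / 100)
    (phip phim : X →L[ℝ] ℝ)
    (hphip : phip = lam • es + (1 - lam) • (hs - (4 * t / ρ) • vs))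
    (hphim : phim = lam • es + (1 - lam) • (-hs + (4 * t / ρ) • vs))
    (k : X) (hk : ‖k‖ ≤ 1) (z : X) (hz : ‖z‖ ≤ 1) (hez : es z ≤ 1 - ρ) :
    phip (xp + k - z) ≥ ρ / 8 - |es k| := by
  have hN : ‖xp + k - z‖ ≤ 3 + t := by
    calc ‖xp + k - z‖ ≤ ‖xp + k‖ + ‖z‖ := norm_sub_le _ _
      _ ≤ ‖xp‖ + ‖k‖ + ‖z‖ := by gcongr; exact norm_add_le _ _
      _ ≤ ((1 - ρ/2) * ‖e‖ + t * ‖h‖) + 1 + 1 := by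
          gcongr
          rw [hxp]
          refine (norm_add_le _ _).trans ?_
          rw [norm_smul, norm_smul, Real.norm_eq_abs, Real.norm_eq_abs,
            abs_of_pos ht0, abs_of_pos (by linarith : (0:ℝ) < 1 - ρ/2)]
      _ ≤ 3 + t := by rw [he, hh]; linarith
  have hA : |hs (xp + k - z)| ≤ 3 + t := by
    calc |hs (xp + k - z)| ≤ ‖hs‖ * ‖xp + k - z‖ := hs.le_opNorm _
      _ ≤ 3 + t := by rw [hhs]; linarith
  have hB : |vs (xp + k - z)| ≤ 3 + t := by
    calc |vs (xp + k - z)| ≤ ‖vs‖ * ‖xp + k - z‖ := vs.le_opNorm _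
      _ ≤ 3 + t := by rw [hvs]; linarith
  have hval : phip (xp + k - z) = lam * ((1 - ρ/2) + t * es h + es k - es z)
      + (1 - lam) * (hs (xp + k - z) - (4 * t / ρ) * vs (xp + k - z)) := by
    rw [hphip]
    simp only [ContinuousLinearMap.add_apply, ContinuousLinearMap.smul_apply,
      ContinuousLinearMap.sub_apply, smul_eq_mul]
    have : es (xp + k - z) = (1 - ρ/2) + t * es h + es k - es z := by
      rw [hxp]; simp [map_add, map_sub, map_smul, hee]
    rw [this]
  rw [hval, hlam]
  generalize hs (xp + k - z) = A at hA ⊢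
  generalize vs (xp + k - z) = B at hB ⊢
  generalize es h = H at heh ⊢
  generalize es z = Z at hez ⊢
  generalize es k = K at *
  have h1 : -|K| ≤ K := neg_abs_le _
  have h2 : -(ρ/800) < H := (abs_lt.mp heh).1
  have h3 : -(3 + t) ≤ A := (abs_le.mp hA).1
  have h4 : B ≤ 3 + t := (abs_le.mp hB).2
  have htρ : 4 * t / ρ ≤ 1/4 := by
    rw [div_le_iff₀ hρ0]; linarith
  have htρ0 : 0 ≤ 4 * t / ρ := by positivity
  have hkabs : 0 ≤ |K| := abs_nonneg _
  have hinner : (1 - ρ/2) + t * H + K - Z ≥ ρ/2 - ρ^2/12800 - |K| := by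
    nlinarith [mul_le_mul_of_nonneg_left h2.le ht0.le]
  have hsecond : A - (4 * t / ρ) * B ≥ -(5/4) * (3 + t) := by
    nlinarith [mul_le_mul_of_nonneg_left h4 htρ0,
      mul_le_mul_of_nonneg_right htρ (by linarith : (0:ℝ) ≤ 3 + t)]
  have hlam1 : 0 ≤ 1 - ρ/100 := by linarith
  nlinarith [mul_le_mul_of_nonneg_left hinner hlam1,
    mul_le_mul_of_nonneg_left hsecond (by linarith : (0:ℝ) ≤ ρ/100),
    mul_nonneg (by linarith : (0:ℝ) ≤ ρ/100) hkabs, sq_nonneg ρ,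
    mul_pos hρ0 ht0, mul_pos hρ0 hρ0]
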